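/- Let d : V → V be linear with d² = 0 on a finite-dimensional real inner product space and δ its adjoint. Suppose the Poincaré inequality holds: there is C_P > 0 such that ‖u‖ ≤ C_P ‖d u‖ for all u ∈ (ker d)ᗮ. Then every u ∈ V with u orthogonal to ker d ∩ ker δ can be written u = d v + w with v ∈ (ker d)ᗮ, w ∈ (ker d)ᗮ, ‖w‖ ≤ C_P ‖d u‖, and ‖v‖ + ‖d v‖ ≤ C ‖u‖ for a constant C depending only on C_P. -/

import Mathlib

open scoped RealInnerProductSpace

theorem stmt_5 {V : Type*} [NormedAddCommGroup V] [InnerProductSpace ℝ V]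
    [FiniteDimensional ℝ V] (d δ : V →ₗ[ℝ] V) (hd : d ∘ₗ d = 0)
    (hadj : ∀ u v : V, ⟪δ u, v⟫ = ⟪u, d v⟫)
    (CP : ℝ) (hCP : 0 < CP)
    (hPoincare : ∀ u ∈ (LinearMap.ker d)ᗮ, ‖u‖ ≤ CP * ‖d u‖) :
    ∃ C : ℝ, 0 < C ∧ ∀ u : V, u ∈ ((LinearMap.ker d ⊓ LinearMap.ker δ : Submodule ℝ V))ᗮ →
      ∃ v w : V, v ∈ (LinearMap.ker d)ᗮ ∧ w ∈ (LinearMap.ker d)ᗮ ∧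
        u = d v + w ∧ ‖w‖ ≤ CP * ‖d u‖ ∧ ‖v‖ + ‖d v‖ ≤ C * ‖u‖ := by
  refine ⟨CP + 1, by linarith, fun u hu => ?_⟩
  set K := LinearMap.ker d with hK
  set a : V := (Submodule.orthogonalProjectionOnto K u : V) with ha
  set w : V := u - a with hw
  have hwK : w ∈ Kᗮ := Submodule.sub_starProjection_mem_orthogonal u
  have haK : a ∈ K := (Submodule.orthogonalProjectionOnto K u).2
  have hda : d a = 0 := haK
  have huaw : u = a + w := by rw [hw]; abel
  have hdu : d u = d w := by
    conv_lhs => rw [huaw]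
    rw [map_add, hda, zero_add]
  -- a is orthogonal to K ⊓ ker δ
  have haperp : ∀ x ∈ (K ⊓ LinearMap.ker δ : Submodule ℝ V), ⟪a, x⟫ = 0 := by
    intro x hx
    have h1 : ⟪x, u⟫ = 0 := (Submodule.mem_orthogonal _ u).mp hu x hx
    have h2 : ⟪x, w⟫ = 0 := by
      have := (Submodule.mem_orthogonal K w).mp hwK x hx.1
      exact this
    have : ⟪x, a⟫ = 0 := by
      have : ⟪x, u⟫ = ⟪x, a⟫ + ⟪x, w⟫ := by rw [huaw, inner_add_right]
      rw [h1, h2] at this; linarith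
    rw [real_inner_comm]; exact this
  -- decompose a relative to range d
  set R := LinearMap.range d with hR
  set r : V := (Submodule.orthogonalProjectionOnto R a : V) with hr
  set h : V := a - r with hh
  have hrR : r ∈ R := (Submodule.orthogonalProjectionOnto R a).2
  have hhR : h ∈ Rᗮ := Submodule.sub_starProjection_mem_orthogonal a
  have hdr : d r = 0 := by
    obtain ⟨y, hy⟩ := hrR
    rw [← hy, ← LinearMap.comp_apply, hd, LinearMap.zero_apply]
  have hdh : d h = 0 := by rw [hh, map_sub, hda, hdr, sub_zero]
  have hδh : δ h = 0 := by
    have key : ∀ y : V, ⟪δ h, y⟫ = 0 := by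
      intro y
      rw [hadj]
      have : ⟪d y, h⟫ = 0 := (Submodule.mem_orthogonal R h).mp hhR _ ⟨y, rfl⟩
      rw [real_inner_comm]; exact this
    have := key (δ h)
    exact inner_self_eq_zero.mp this
  have hhmem : h ∈ (K ⊓ LinearMap.ker δ : Submodule ℝ V) := ⟨hdh, hδh⟩
  have hah : ⟪a, h⟫ = 0 := haperp h hhmem
  have hrh : ⟪r, h⟫ = 0 := (Submodule.mem_orthogonal R h).mp hhR r hrR
  have hh0 : h = 0 := by
    have : ⟪h, h⟫ = 0 := by
      have : ⟪a - r, h⟫ = ⟪a, h⟫ - ⟪r, h⟫ := inner_sub_left a r h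
      rw [hah, hrh] at this
      rw [hh]; rw [this]; ring
    exact inner_self_eq_zero.mp this
  have haR : a ∈ R := by
    have : a = r := by rw [← sub_eq_zero, ← hh, hh0]
    rw [this]; exact hrR
  obtain ⟨v₀, hv₀⟩ := haR
  set v : V := v₀ - (Submodule.orthogonalProjectionOnto K v₀ : V) with hv
  have hvK : v ∈ Kᗮ := Submodule.sub_starProjection_mem_orthogonal v₀
  have hdv : d v = a := by
    have : d ((Submodule.orthogonalProjectionOnto K v₀ : V)) = 0 := (Submodule.orthogonalProjectionOnto K v₀).2
    rw [hv, map_sub, this, sub_zero, hv₀]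
  -- norms
  have hau : ⟪a, w⟫ = 0 := (Submodule.mem_orthogonal K w).mp hwK a haK
  have hnorm : ‖u‖ ^ 2 = ‖a‖ ^ 2 + ‖w‖ ^ 2 := by
    rw [huaw, norm_add_sq_real, hau]; ring
  have hale : ‖a‖ ≤ ‖u‖ := by
    nlinarith [norm_nonneg a, norm_nonneg w, norm_nonneg u]
  have hwb : ‖w‖ ≤ CP * ‖d u‖ := by
    rw [hdu]; exact hPoincare w hwK
  have hvb : ‖v‖ ≤ CP * ‖a‖ := by
    have := hPoincare v hvK
    rwa [hdv] at this
  refine ⟨v, w, hvK, hwK, ?_, hwb, ?_⟩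
  · rw [hdv, ← huaw]
  · rw [hdv]
    nlinarith [hCP.le]
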